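/- Assume the RNdS parameters (Λ, M, Q) (with Λ > 0, M > 0) are non-degenerate, with horizon radii r₋ < r₊. Let k be real with k² ≥ 2 and set c̃ := 3M + √(9M² + 4(k² − 2)Q²) and c₊ := −Q(k² − 2)/(2c̃). Then for every r ∈ [r₋, r₊] one has H₊(r) := 1 − 4Q²/(c̃ r) > 0 and H₋(r) := (k² − 2) + (6M/r)(1 − 4Q c₊/(3M)) > 0. -/

import Mathlib

/-- The Reissner–Nordström–de Sitter metric coefficient
`μ(r) = 1 − 2M/r − Λr²/3 + Q²/r²`. -/
noncomputable def mu (Λ M Q r : ℝ) : ℝ := 1 - 2 * M / r - Λ * r ^ 2 / 3 + Q ^ 2 / r ^ 2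

/-- `ψ(r) = μ(r)/r²`. -/
noncomputable def psi (Λ M Q r : ℝ) : ℝ := mu Λ M Q r / r ^ 2

/-- Non-degeneracy of the RNdS parameters `(Λ, M, Q)`, witnessed by the horizon radii
`0 < rm < rp`. -/
def NondegAt (Λ M Q rm rp : ℝ) : Prop :=
  0 < rm ∧ rm < rp ∧
  mu Λ M Q rm = 0 ∧ mu Λ M Q rp = 0 ∧
  deriv (mu Λ M Q) rm ≠ 0 ∧ deriv (mu Λ M Q) rp ≠ 0 ∧
  (∀ r : ℝ, (rm < r ∧ r < rp) ∨ rp < r → mu Λ M Q r ≠ 0) ∧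
  ∃ rP ∈ Set.Ioo rm rp,
    deriv (psi Λ M Q) rP = 0 ∧
    deriv (deriv (psi Λ M Q)) rP ≠ 0 ∧
    ∀ r ∈ Set.Ioo rm rp, deriv (psi Λ M Q) r = 0 → r = rP

open Set Filter Topology

noncomputable def G (Λ M Q : ℝ) : ℝ → ℝ := fun r => r ^ 2 - 2 * M * r - Λ * r ^ 4 / 3 + Q ^ 2

lemma G_hasDerivAt (Λ M Q r : ℝ) :
    HasDerivAt (G Λ M Q) (2 * r - 2 * M - 4 * Λ * r ^ 3 / 3) r := by
  have h := (((hasDerivAt_pow 2 r).sub ((hasDerivAt_id r).const_mul (2 * M))).sub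
      (((hasDerivAt_pow 4 r).const_mul Λ).div_const 3)).add_const (Q ^ 2)
  rw [show (2 * r - 2 * M - 4 * Λ * r ^ 3 / 3) = ((2:ℕ):ℝ) * r ^ (2 - 1) - 2 * M * 1 - Λ * (((4:ℕ):ℝ) * r ^ (4 - 1)) / 3 by norm_num; ring]
  exact h

lemma G_cont (Λ M Q : ℝ) : Continuous (G Λ M Q) := by
  unfold G; continuity

lemma mu_eq_G_div (Λ M Q r : ℝ) (hr : r ≠ 0) : mu Λ M Q r = G Λ M Q r / r ^ 2 := by
  unfold mu G; field_simp

lemma G_eq_zero (Λ M Q r : ℝ) (hr : r ≠ 0) (hmu : mu Λ M Q r = 0) : G Λ M Q r = 0 := by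
  have := mu_eq_G_div Λ M Q r hr
  rw [hmu] at this
  field_simp at this
  linarith [this]

lemma mu_hasDerivAt (Λ M Q x : ℝ) (hx : x ≠ 0) :
    HasDerivAt (mu Λ M Q)
      (((2 * x - 2 * M - 4 * Λ * x ^ 3 / 3) * x ^ 2 - G Λ M Q x * (2 * x ^ 1)) / (x ^ 2) ^ 2) x := by
  have h := (G_hasDerivAt Λ M Q x).div (hasDerivAt_pow 2 x) (pow_ne_zero 2 hx)
  refine h.congr_of_eventuallyEq ?_
  filter_upwards [isOpen_compl_singleton.mem_nhds hx] with r hr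
  exact mu_eq_G_div Λ M Q r hr

lemma key (Λ M Q rm rp : ℝ) (hΛ : 0 < Λ) (hM : 0 < M) (hrm : 0 < rm) (hlt : rm < rp)
    (hμm : mu Λ M Q rm = 0) (hμp : mu Λ M Q rp = 0)
    (hdp : deriv (mu Λ M Q) rp ≠ 0)
    (hne : ∀ r : ℝ, (rm < r ∧ r < rp) ∨ rp < r → mu Λ M Q r ≠ 0) :
    Q ^ 2 < M * rm := by
  have hrp : 0 < rp := lt_trans hrm hlt
  have Gm : G Λ M Q rm = 0 := G_eq_zero _ _ _ _ (ne_of_gt hrm) hμm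
  have Gp : G Λ M Q rp = 0 := G_eq_zero _ _ _ _ (ne_of_gt hrp) hμp
  have Gne : ∀ r : ℝ, (rm < r ∧ r < rp) ∨ rp < r → G Λ M Q r ≠ 0 := by
    intro r hr hG
    have hr0 : (0:ℝ) < r := by rcases hr with ⟨h1, _⟩ | h1 <;> linarith
    exact hne r hr (by rw [mu_eq_G_div Λ M Q r (ne_of_gt hr0), hG]; simp)
  -- a far-away point where G is negative
  set R : ℝ := max (rp + 1) (Real.sqrt (3 * (1 + Q ^ 2) / Λ) + 1) with hR
  have hR1 : rp + 1 ≤ R := le_max_left _ _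
  have hRrp : rp < R := by linarith
  have hRone : 1 ≤ R := by linarith
  have hsq : Real.sqrt (3 * (1 + Q ^ 2) / Λ) + 1 ≤ R := le_max_right _ _
  have hsqle : Real.sqrt (3 * (1 + Q ^ 2) / Λ) ^ 2 ≤ (R - 1) ^ 2 := by
    have h0 := Real.sqrt_nonneg (3 * (1 + Q ^ 2) / Λ)
    nlinarith
  have harg : (0:ℝ) ≤ 3 * (1 + Q ^ 2) / Λ := by positivity
  rw [Real.sq_sqrt harg] at hsqle
  have hΛR : 3 * (1 + Q ^ 2) ≤ Λ * R ^ 2 := by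
    rw [div_le_iff₀ hΛ] at hsqle
    nlinarith
  have hGR : G Λ M Q R < 0 := by
    have hRpos : (0:ℝ) < R := by linarith
    unfold G
    nlinarith [mul_le_mul_of_nonneg_left hΛR (sq_nonneg R), sq_nonneg Q, sq_nonneg (R - 1)]
  -- G is negative beyond rp
  have Gneg : ∀ r : ℝ, rp < r → G Λ M Q r < 0 := by
    intro r hr
    rcases lt_trichotomy (G Λ M Q r) 0 with h | h | h
    · exact h
    · exact absurd h (Gne r (Or.inr hr))
    · rcases lt_trichotomy r R with hrR | hrR | hrR
      · have : (0:ℝ) ∈ Ioo (G Λ M Q R) (G Λ M Q r) := ⟨hGR, h⟩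
        obtain ⟨c, hc, hc0⟩ := intermediate_value_Ioo' (le_of_lt hrR)
          (G_cont Λ M Q).continuousOn this
        exact absurd hc0 (Gne c (Or.inr (lt_trans hr hc.1)))
      · rw [hrR] at h; linarith
      · have : (0:ℝ) ∈ Ioo (G Λ M Q R) (G Λ M Q r) := ⟨hGR, h⟩
        obtain ⟨c, hc, hc0⟩ := intermediate_value_Ioo (le_of_lt hrR)
          (G_cont Λ M Q).continuousOn this
        exact absurd hc0 (Gne c (Or.inr (lt_trans hRrp hc.1)))
  -- derivative of G at rp is nonzero
  have hgp : 2 * rp - 2 * M - 4 * Λ * rp ^ 3 / 3 ≠ 0 := by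
    intro h0
    apply hdp
    rw [(mu_hasDerivAt Λ M Q rp (ne_of_gt hrp)).deriv, h0, Gp]
    simp
  -- derivative of G at rp is ≤ 0 (slopes from the right are negative)
  have hslope_p : Tendsto (slope (G Λ M Q) rp) (𝓝[≠] rp)
      (𝓝 (2 * rp - 2 * M - 4 * Λ * rp ^ 3 / 3)) :=
    hasDerivAt_iff_tendsto_slope.mp (G_hasDerivAt Λ M Q rp)
  have hdgp_le : 2 * rp - 2 * M - 4 * Λ * rp ^ 3 / 3 ≤ 0 := by
    have ht : Tendsto (slope (G Λ M Q) rp) (𝓝[>] rp)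
        (𝓝 (2 * rp - 2 * M - 4 * Λ * rp ^ 3 / 3)) :=
      hslope_p.mono_left (nhdsWithin_mono _ (fun x hx => ne_of_gt hx))
    refine le_of_tendsto ht ?_
    filter_upwards [self_mem_nhdsWithin] with r hr
    have hr' : rp < r := hr
    have : G Λ M Q r < 0 := Gneg r hr'
    rw [slope_def_field]
    have hlt0 : (G Λ M Q r - G Λ M Q rp) / (r - rp) < 0 := by
      apply div_neg_of_neg_of_pos
      · rw [Gp]; linarith
      · linarith
    linarith
  have hdgp : 2 * rp - 2 * M - 4 * Λ * rp ^ 3 / 3 < 0 := lt_of_le_of_ne hdgp_le hgp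
  -- find a point in (rm, rp) where G is positive
  obtain ⟨r1, hr1mem, hr1pos⟩ : ∃ r1 ∈ Ioo rm rp, 0 < G Λ M Q r1 := by
    have ht : Tendsto (slope (G Λ M Q) rp) (𝓝[<] rp)
        (𝓝 (2 * rp - 2 * M - 4 * Λ * rp ^ 3 / 3)) :=
      hslope_p.mono_left (nhdsWithin_mono _ (fun x hx => ne_of_lt hx))
    have h1 : ∀ᶠ r in 𝓝[<] rp, slope (G Λ M Q) rp r < 0 :=
      ht.eventually_lt_const hdgp
    have h2 : Ioo rm rp ∈ 𝓝[<] rp := Ioo_mem_nhdsLT_of_mem ⟨hlt, le_refl rp⟩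
    obtain ⟨r1, hs, hmem⟩ := (h1.and (eventually_of_mem h2 (fun x hx => hx))).exists
    refine ⟨r1, hmem, ?_⟩
    rw [slope_def_field, Gp] at hs
    have hr1p : r1 - rp < 0 := by linarith [hmem.2]
    rcases lt_trichotomy (G Λ M Q r1) 0 with h | h | h
    · have : 0 < (G Λ M Q r1 - 0) / (r1 - rp) := div_pos_of_neg_of_neg (by linarith) hr1p
      linarith
    · exact absurd h (Gne r1 (Or.inl ⟨hmem.1, hmem.2⟩))
    · exact h
  -- G is positive on (rm, rp)
  have Gpos : ∀ r ∈ Ioo rm rp, 0 < G Λ M Q r := by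
    intro r hrmem
    rcases lt_trichotomy (G Λ M Q r) 0 with h | h | h
    · exfalso
      rcases lt_trichotomy r r1 with hrr | hrr | hrr
      · have : (0:ℝ) ∈ Ioo (G Λ M Q r) (G Λ M Q r1) := ⟨h, hr1pos⟩
        obtain ⟨c, hc, hc0⟩ := intermediate_value_Ioo (le_of_lt hrr)
          (G_cont Λ M Q).continuousOn this
        exact Gne c (Or.inl ⟨lt_trans hrmem.1 hc.1, lt_trans hc.2 hr1mem.2⟩) hc0
      · rw [hrr] at h; linarith
      · have : (0:ℝ) ∈ Ioo (G Λ M Q r) (G Λ M Q r1) := ⟨h, hr1pos⟩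
        obtain ⟨c, hc, hc0⟩ := intermediate_value_Ioo' (le_of_lt hrr)
          (G_cont Λ M Q).continuousOn this
        exact Gne c (Or.inl ⟨lt_trans hr1mem.1 hc.1, lt_trans hc.2 hrmem.2⟩) hc0
    · exact absurd h (Gne r (Or.inl ⟨hrmem.1, hrmem.2⟩))
    · exact h
  -- derivative of G at rm is ≥ 0
  have hdgm : 0 ≤ 2 * rm - 2 * M - 4 * Λ * rm ^ 3 / 3 := by
    have ht : Tendsto (slope (G Λ M Q) rm) (𝓝[>] rm)
        (𝓝 (2 * rm - 2 * M - 4 * Λ * rm ^ 3 / 3)) :=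
      (hasDerivAt_iff_tendsto_slope.mp (G_hasDerivAt Λ M Q rm)).mono_left
        (nhdsWithin_mono _ (fun x hx => ne_of_gt hx))
    refine ge_of_tendsto ht ?_
    filter_upwards [Ioo_mem_nhdsGT_of_mem ⟨le_refl rm, hlt⟩] with r hr
    rw [slope_def_field, Gm]
    have := Gpos r hr
    apply div_nonneg <;> linarith [hr.1]
  -- conclude
  have hGm' : rm ^ 2 - 2 * M * rm - Λ * rm ^ 4 / 3 + Q ^ 2 = 0 := Gm
  nlinarith [mul_pos hΛ (pow_pos hrm 3), mul_pos hrm hrm]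

/-- Positivity of `H₊ = 1 − 4Q²/(c̃ r)` and `H₋ = (k² − 2) + (6M/r)(1 − 4Q c₊/(3M))`
on `[r₋, r₊]`, where `c̃ = 3M + √(9M² + 4(k² − 2)Q²)` and `c₊ = −Q(k² − 2)/(2c̃)`,
for non-degenerate RNdS parameters and `k² ≥ 2`. -/
theorem Hpm_positive (Λ M Q rm rp k ctilde cplus : ℝ) (hΛ : 0 < Λ) (hM : 0 < M)
    (h : NondegAt Λ M Q rm rp) (hk : 2 ≤ k ^ 2)
    (hct : ctilde = 3 * M + Real.sqrt (9 * M ^ 2 + 4 * (k ^ 2 - 2) * Q ^ 2))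
    (hcp : cplus = -(Q * (k ^ 2 - 2)) / (2 * ctilde)) :
    ∀ r ∈ Set.Icc rm rp,
      0 < 1 - 4 * Q ^ 2 / (ctilde * r) ∧
      0 < (k ^ 2 - 2) + (6 * M / r) * (1 - 4 * Q * cplus / (3 * M)) := by

  obtain ⟨hrm, hlt, hμm, hμp, hdm, hdp, hne, -⟩ := h
  have hq : Q ^ 2 < M * rm := key Λ M Q rm rp hΛ hM hrm hlt hμm hμp hdp hne
  have hsqrt : 3 * M ≤ Real.sqrt (9 * M ^ 2 + 4 * (k ^ 2 - 2) * Q ^ 2) := by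
    have h1 : Real.sqrt ((3 * M) ^ 2) ≤ Real.sqrt (9 * M ^ 2 + 4 * (k ^ 2 - 2) * Q ^ 2) := by
      apply Real.sqrt_le_sqrt
      nlinarith [sq_nonneg Q]
    rwa [Real.sqrt_sq (by linarith : (0:ℝ) ≤ 3 * M)] at h1
  have hc6 : 6 * M ≤ ctilde := by rw [hct]; linarith
  have hcpos : 0 < ctilde := by linarith
  intro r hr
  have hr0 : 0 < r := lt_of_lt_of_le hrm hr.1
  constructor
  · have hpos : 0 < ctilde * r := mul_pos hcpos hr0
    rw [sub_pos, div_lt_one hpos]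
    have h1 : 4 * Q ^ 2 < 4 * (M * rm) := by linarith
    have h2 : 4 * (M * rm) ≤ 4 * (M * r) := by nlinarith [hr.1]
    have h3 : 4 * (M * r) < 6 * M * r := by nlinarith
    have h4 : 6 * M * r ≤ ctilde * r := by nlinarith
    linarith
  · have hMne : (3:ℝ) * M ≠ 0 := by positivity
    have heq : 4 * Q * cplus / (3 * M) = -(2 * Q ^ 2 * (k ^ 2 - 2)) / (3 * M * ctilde) := by
      rw [hcp]
      field_simp
      ring
    rw [heq]
    have hnum : 0 ≤ 2 * Q ^ 2 * (k ^ 2 - 2) := by nlinarith [sq_nonneg Q]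
    have hden : 0 < 3 * M * ctilde := by positivity
    have hfrac : 0 ≤ 2 * Q ^ 2 * (k ^ 2 - 2) / (3 * M * ctilde) := div_nonneg hnum (le_of_lt hden)
    have hfactor : 0 < 1 - -(2 * Q ^ 2 * (k ^ 2 - 2)) / (3 * M * ctilde) := by
      rw [neg_div, sub_neg_eq_add]
      linarith
    have h6M : 0 < 6 * M / r := by positivity
    nlinarith [mul_pos h6M hfactor]
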